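/- For every 2×2 density matrix ρ there exists a real operation mapping the maximal imaginary state to ρ; that is, there exist finitely many 2×2 complex matrices K₁,…,K_N with all real entries such that Σₘ Kₘ†Kₘ = I and ρ = Σₘ Kₘ · M₊ · Kₘ†, where M₊ = (1/2)[[1, −i],[i, 1]] is the density matrix of |+⟩ = (|0⟩ + i|1⟩)/√2. -/

import Mathlib

open Matrix Kronecker BigOperators
open scoped ComplexOrder

noncomputable section

/-- A density matrix: positive semidefinite with trace 1. -/
def IsDensityMatrix {n : Type*} [Fintype n] [DecidableEq n] (ρ : Matrix n n ℂ) : Prop :=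
  ρ.PosSemidef ∧ ρ.trace = 1

/-- The l₁-norm imaginarity measure: sum of |Im ρᵢⱼ| over off-diagonal entries. -/
noncomputable def Fl1 {n : Type*} [Fintype n] [DecidableEq n] (ρ : Matrix n n ℂ) : ℝ :=
  ∑ i, ∑ j, if i = j then 0 else |(ρ i j).im|

/-- The trace norm ‖M‖₁ = Tr √(M†M). -/
noncomputable def traceNorm {n : Type*} [Fintype n] [DecidableEq n] (M : Matrix n n ℂ) : ℝ :=
  (((Matrix.posSemidef_conjTranspose_mul_self M).1.eigenvectorUnitary.1 *
    diagonal (fun i => (((√·) ∘ (Matrix.posSemidef_conjTranspose_mul_self M).1.eigenvalues) i : ℂ)) *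
    (star (Matrix.posSemidef_conjTranspose_mul_self M).1.eigenvectorUnitary : Matrix n n ℂ)).trace).re

/-- The robustness of imaginarity: (1/2)‖ρ − ρᵀ‖₁. -/
noncomputable def FR {n : Type*} [Fintype n] [DecidableEq n] (ρ : Matrix n n ℂ) : ℝ :=
  traceNorm (ρ - ρᵀ) / 2

/-- Von Neumann entropy (base-2), via eigenvalues of a Hermitian matrix
(junk value 0 if not Hermitian). -/
noncomputable def vnEntropy {n : Type*} [Fintype n] [DecidableEq n] (σ : Matrix n n ℂ) : ℝ :=
  if h : σ.IsHermitian then -∑ j, (h.eigenvalues j) * Real.logb 2 (h.eigenvalues j) else 0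

/-- The relative entropy of imaginarity: S(Re ρ) − S(ρ), Re ρ = (ρ + ρᵀ)/2. -/
noncomputable def Fr {n : Type*} [Fintype n] [DecidableEq n] (ρ : Matrix n n ℂ) : ℝ :=
  vnEntropy ((1/2 : ℂ) • (ρ + ρᵀ)) - vnEntropy ρ

/-- The canonical single-qubit state ρ_A. -/
noncomputable def rhoA (A : ℝ) : Matrix (Fin 2) (Fin 2) ℂ :=
  !![(((1 + A) / 2 : ℝ) : ℂ), -(Complex.I / 2) * (Real.sqrt (1 - A ^ 2) : ℂ);
     (Complex.I / 2) * (Real.sqrt (1 - A ^ 2) : ℂ), (((1 - A) / 2 : ℝ) : ℂ)]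

/-- Density matrix of the maximal imaginary state |+⟩ = (|0⟩ + i|1⟩)/√2. -/
noncomputable def Mplus : Matrix (Fin 2) (Fin 2) ℂ :=
  (1/2 : ℂ) • !![1, -Complex.I; Complex.I, 1]


/-- First real Kraus operator built from a complex column vector. -/
noncomputable def kr0 (w : Fin 2 → ℂ) : Matrix (Fin 2) (Fin 2) ℂ :=
  !![((w 0).re : ℂ), ((w 0).im : ℂ); ((w 1).re : ℂ), ((w 1).im : ℂ)]

/-- Second real Kraus operator built from a complex column vector. -/
noncomputable def kr1 (w : Fin 2 → ℂ) : Matrix (Fin 2) (Fin 2) ℂ :=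
  !![((w 0).im : ℂ), -((w 0).re : ℂ); ((w 1).im : ℂ), -((w 1).re : ℂ)]

lemma kr_sum_conj (w : Fin 2 → ℂ) :
    (kr0 w)ᴴ * kr0 w + (kr1 w)ᴴ * kr1 w
      = ((Complex.normSq (w 0) + Complex.normSq (w 1) : ℝ) : ℂ) • 1 := by
  ext i a
  fin_cases i <;> fin_cases a <;>
    simp [kr0, kr1, Matrix.mul_apply, Fin.sum_univ_two, Matrix.one_apply, Complex.normSq] <;>
    ring

lemma kr_image (w : Fin 2 → ℂ) :
    kr0 w * Mplus * (kr0 w)ᴴ + kr1 w * Mplus * (kr1 w)ᴴ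
      = Matrix.of (fun i l => w i * (starRingEnd ℂ) (w l)) := by
  ext i a
  fin_cases i <;> fin_cases a <;>
  · simp [kr0, kr1, Mplus, Matrix.mul_apply, Matrix.conjTranspose_apply,
      Matrix.vecMul, dotProduct, Fin.sum_univ_two]
    apply Complex.ext <;> simp <;> ring

open scoped MatrixOrder in
lemma psd_sqrt_exists {n : Type*} [Fintype n] [DecidableEq n] {A : Matrix n n ℂ}
    (hA : A.PosSemidef) : ∃ S : Matrix n n ℂ, S.IsHermitian ∧ S * S = A :=
  ⟨CFC.sqrt A, (CFC.sqrt_nonneg A).posSemidef.1, CFC.sqrt_mul_sqrt_self A hA.nonneg⟩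

/-- every 2×2 density matrix is the image of the maximal imaginary state
under a real operation. -/
theorem exists_real_operation_from_maximal_imaginary
    (ρ : Matrix (Fin 2) (Fin 2) ℂ) (hρ : IsDensityMatrix ρ) :
    ∃ (N : ℕ) (K : Fin N → Matrix (Fin 2) (Fin 2) ℂ),
      (∀ m i j, (K m i j).im = 0) ∧
      ((∑ m, (K m)ᴴ * K m) = 1) ∧
      ρ = ∑ m, K m * Mplus * (K m)ᴴ := by
  obtain ⟨hpsd, htr⟩ := hρ
  obtain ⟨S, hherm, hmul⟩ := psd_sqrt_exists hpsd
  have hconj : ∀ i j, (starRingEnd ℂ) (S i j) = S j i := by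
    intro i j
    conv_rhs => rw [← hherm]
    simp [Matrix.conjTranspose_apply]
  set c0 : Fin 2 → ℂ := fun i => S i 0 with hc0
  set c1 : Fin 2 → ℂ := fun i => S i 1 with hc1
  have e : ∀ i j, S i j * S j i = (Complex.normSq (S i j) : ℂ) := by
    intro i j
    rw [← hconj i j, Complex.mul_conj]
  refine ⟨4, ![kr0 c0, kr1 c0, kr0 c1, kr1 c1], ?_, ?_, ?_⟩
  · intro m i j
    fin_cases m <;> fin_cases i <;> fin_cases j <;> simp [kr0, kr1]
  · have hsum : (Complex.normSq (c0 0) + Complex.normSq (c0 1) : ℝ)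
        + (Complex.normSq (c1 0) + Complex.normSq (c1 1)) = 1 := by
      have h1 : ρ.trace = (((Complex.normSq (c0 0) + Complex.normSq (c0 1) : ℝ)
          + (Complex.normSq (c1 0) + Complex.normSq (c1 1)) : ℝ) : ℂ) := by
        rw [← hmul]
        simp only [Matrix.trace, Matrix.diag, Matrix.mul_apply, Fin.sum_univ_two]
        rw [e 0 0, e 0 1, e 1 0, e 1 1]
        have h0 : c0 0 = S 0 0 := rfl
        have h1 : c0 1 = S 1 0 := rfl
        have h2 : c1 0 = S 0 1 := rfl
        have h3 : c1 1 = S 1 1 := rfl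
        rw [h0, h1, h2, h3]
        push_cast
        ring
      rw [htr] at h1
      exact_mod_cast h1.symm
    rw [Fin.sum_univ_four]
    simp only [Matrix.cons_val_zero, Matrix.cons_val_one, Matrix.head_cons,
      Matrix.cons_val_two, Matrix.tail_cons, Matrix.cons_val_three]
    rw [kr_sum_conj c0, add_assoc, kr_sum_conj c1, ← add_smul, ← Complex.ofReal_add, hsum]
    simp
  · rw [Fin.sum_univ_four]
    simp only [Matrix.cons_val_zero, Matrix.cons_val_one, Matrix.head_cons,
      Matrix.cons_val_two, Matrix.tail_cons, Matrix.cons_val_three]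
    rw [kr_image c0, add_assoc, kr_image c1]
    ext i l
    have hρil : ρ i l = (S * S) i l := by rw [hmul]
    rw [hρil]
    simp only [Matrix.add_apply, Matrix.of_apply, Matrix.mul_apply, Fin.sum_univ_two]
    have h0 : c0 i = S i 0 := rfl
    have h1 : c1 i = S i 1 := rfl
    have h2 : c0 l = S l 0 := rfl
    have h3 : c1 l = S l 1 := rfl
    rw [h0, h1, h2, h3, hconj l 0, hconj l 1]
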